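/- arXiv:1105.3326 — 3 statements merged into one kernel-verified Lean document; each statement's English description precedes it below -/
import Mathlib

section
/- (Minimal sampling rate bound, Proposition 1) Let h : A → H satisfy α_h‖θ₁−θ₂‖ ≤ ‖h(θ₁)−h(θ₂)‖ with α_h > 0, and let S : H → ℝ^N satisfy α_s‖x₁−x₂‖ ≤ ‖S(x₁)−S(x₂)‖ with α_s > 0, where both h and S are Fréchet differentiable. Then for every θ₁ ∈ A, N ≥ K + dim(ker((DS)(h(θ₁))*)), where (DS)(h(θ₁))* denotes the adjoint of the Fréchet derivative of S at h(θ₁). -/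
/-- If `f` has derivative `f'` at `x₀` and satisfies a lower Lipschitz bound near `x₀`,
then `f'` satisfies the same lower bound. -/
lemma deriv_lower_bound {E F : Type*} [NormedAddCommGroup E] [NormedSpace ℝ E]
    [NormedAddCommGroup F] [NormedSpace ℝ F] {f : E → F} {f' : E →L[ℝ] F} {x₀ : E}
    (hf : HasFDerivAt f f' x₀) {s : Set E} (hs : s ∈ nhds x₀) {c : ℝ}
    (hle : ∀ y ∈ s, c * ‖y - x₀‖ ≤ ‖f y - f x₀‖) (v : E) : c * ‖v‖ ≤ ‖f' v‖ := by
  rcases eq_or_ne v 0 with rfl | hv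
  · simp
  have hv' : 0 < ‖v‖ := norm_pos_iff.2 hv
  refine le_of_forall_pos_le_add fun ε hε => ?_
  have hlo := (hasFDerivAt_iff_isLittleO_nhds_zero.mp hf).def
      (show (0:ℝ) < ε / ‖v‖ from div_pos hε hv')
  have hmem : ∀ᶠ u in nhds (0 : E), x₀ + u ∈ s := by
    have : Filter.Tendsto (fun u : E => x₀ + u) (nhds 0) (nhds x₀) := by
      simpa using (continuous_add_left x₀).tendsto (0 : E)
    exact this.eventually_mem hs
  have htend : Filter.Tendsto (fun t : ℝ => t • v) (nhds 0) (nhds (0 : E)) := by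
    have hc : Continuous (fun t : ℝ => t • v) := continuous_id.smul continuous_const
    simpa using hc.tendsto (0 : ℝ)
  have hboth := (htend.eventually (hlo.and hmem))
  rcases Metric.eventually_nhds_iff.mp hboth with ⟨δ, hδ, hδ'⟩
  set t : ℝ := δ / 2 with ht
  have htpos : 0 < t := by positivity
  have hdist : dist t (0:ℝ) < δ := by
    rw [Real.dist_eq, sub_zero, abs_of_pos htpos]
    rw [ht]; linarith
  obtain ⟨h1, h2⟩ := hδ' hdist
  have key := hle _ h2
  have e1 : (x₀ + t • v) - x₀ = t • v := by abel
  rw [e1, norm_smul, Real.norm_eq_abs, abs_of_pos htpos] at key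
  have h1' : ‖f (x₀ + t • v) - f x₀ - f' (t • v)‖ ≤ (ε / ‖v‖) * (t * ‖v‖) := by
    simpa [norm_smul, abs_of_pos htpos] using h1
  have h3 : ‖f (x₀ + t • v) - f x₀‖ ≤ ‖f' (t • v)‖ + (ε / ‖v‖) * (t * ‖v‖) := by
    calc ‖f (x₀ + t • v) - f x₀‖
        = ‖f' (t • v) + (f (x₀ + t • v) - f x₀ - f' (t • v))‖ := by congr 1; abel
      _ ≤ ‖f' (t • v)‖ + ‖f (x₀ + t • v) - f x₀ - f' (t • v)‖ := norm_add_le _ _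
      _ ≤ _ := by linarith
  have e2 : ‖f' (t • v)‖ = t * ‖f' v‖ := by
    rw [map_smul, norm_smul, Real.norm_eq_abs, abs_of_pos htpos]
  have : c * (t * ‖v‖) ≤ t * ‖f' v‖ + (ε / ‖v‖) * (t * ‖v‖) := by
    rw [← e2]; linarith
  have hεv : (ε / ‖v‖) * ‖v‖ = ε := div_mul_cancel₀ _ (ne_of_gt hv')
  nlinarith [this, htpos, hεv]

lemma ker_adjoint_eq {H : Type*} [NormedAddCommGroup H] [InnerProductSpace ℝ H]
    [CompleteSpace H] {N : ℕ} (T : H →L[ℝ] EuclideanSpace ℝ (Fin N)) :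
    LinearMap.ker (ContinuousLinearMap.adjoint T).toLinearMap = (LinearMap.range (T : H →ₗ[ℝ] EuclideanSpace ℝ (Fin N)))ᗮ := by
  ext x
  simp only [LinearMap.mem_ker, ContinuousLinearMap.coe_coe, Submodule.mem_orthogonal]
  constructor
  · rintro hx y ⟨u, rfl⟩
    have : (inner ℝ u (ContinuousLinearMap.adjoint T x) : ℝ) = inner ℝ (T u) x :=
      ContinuousLinearMap.adjoint_inner_right T u x
    rw [hx] at this
    simpa [real_inner_comm] using this.symm
  · intro hx
    rw [← inner_self_eq_zero (𝕜 := ℝ)]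
    have : (inner ℝ (ContinuousLinearMap.adjoint T x) (ContinuousLinearMap.adjoint T x) : ℝ)
        = inner ℝ x (T (ContinuousLinearMap.adjoint T x)) :=
      ContinuousLinearMap.adjoint_inner_left T _ x
    rw [this, real_inner_comm]
    exact hx _ ⟨_, rfl⟩


/-- Proposition 1: minimal sampling rate. -/
theorem stmt_4 {K N : ℕ} {H : Type*} [NormedAddCommGroup H] [InnerProductSpace ℝ H]
    [CompleteSpace H]
    (A : Set (EuclideanSpace ℝ (Fin K))) (hA : IsOpen A)
    (h : EuclideanSpace ℝ (Fin K) → H)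
    (S : H → EuclideanSpace ℝ (Fin N))
    (Dh : EuclideanSpace ℝ (Fin K) → (EuclideanSpace ℝ (Fin K) →L[ℝ] H))
    (DS : H → (H →L[ℝ] EuclideanSpace ℝ (Fin N)))
    (hDh : ∀ θ ∈ A, HasFDerivAt h (Dh θ) θ)
    (hDS : ∀ x, HasFDerivAt S (DS x) x)
    (αh αs : ℝ) (hαh : 0 < αh) (hαs : 0 < αs)
    (hhstab : ∀ θ₁ ∈ A, ∀ θ₂ ∈ A, αh * ‖θ₁ - θ₂‖ ≤ ‖h θ₁ - h θ₂‖)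
    (hSstab : ∀ x₁ ∈ h '' A, ∀ x₂ ∈ h '' A, αs * ‖x₁ - x₂‖ ≤ ‖S x₁ - S x₂‖)
    (θ₁ : EuclideanSpace ℝ (Fin K)) (hθ₁ : θ₁ ∈ A) :
    N ≥ K + Module.finrank ℝ
      (LinearMap.ker (ContinuousLinearMap.adjoint (DS (h θ₁))).toLinearMap) := by
  set T := DS (h θ₁) with hT
  set C := T.comp (Dh θ₁) with hC
  have hcomp : HasFDerivAt (S ∘ h) C θ₁ := (hDS (h θ₁)).comp θ₁ (hDh θ₁ hθ₁)
  have hlow : ∀ θ ∈ A, (αs * αh) * ‖θ - θ₁‖ ≤ ‖(S ∘ h) θ - (S ∘ h) θ₁‖ := by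
    intro θ hθ
    have h1 := hhstab θ hθ θ₁ hθ₁
    have h2 := hSstab (h θ) ⟨θ, hθ, rfl⟩ (h θ₁) ⟨θ₁, hθ₁, rfl⟩
    calc (αs * αh) * ‖θ - θ₁‖ = αs * (αh * ‖θ - θ₁‖) := by ring
      _ ≤ αs * ‖h θ - h θ₁‖ := by nlinarith
      _ ≤ ‖S (h θ) - S (h θ₁)‖ := h2
  have hbd : ∀ v, (αs * αh) * ‖v‖ ≤ ‖C v‖ :=
    fun v => deriv_lower_bound hcomp (hA.mem_nhds hθ₁) hlow v
  have hinj : Function.Injective C := by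
    intro a b hab
    have hz : C (a - b) = 0 := by rw [map_sub, hab, sub_self]
    have hb := hbd (a - b)
    rw [hz, norm_zero] at hb
    have : ‖a - b‖ ≤ 0 := nonpos_of_mul_nonpos_right hb (by positivity)
    have : a - b = 0 := norm_le_zero_iff.mp this
    exact sub_eq_zero.mp this
  have hrangeC : Module.finrank ℝ (LinearMap.range (C : EuclideanSpace ℝ (Fin K) →ₗ[ℝ] EuclideanSpace ℝ (Fin N))) = K := by
    rw [LinearMap.finrank_range_of_inj hinj]
    simp
  have hle : LinearMap.range (C : EuclideanSpace ℝ (Fin K) →ₗ[ℝ] EuclideanSpace ℝ (Fin N)) ≤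
      LinearMap.range (T : H →ₗ[ℝ] EuclideanSpace ℝ (Fin N)) := by
    rw [hC, ContinuousLinearMap.toLinearMap_comp]
    exact LinearMap.range_comp_le_range _ _
  have hK : K ≤ Module.finrank ℝ (LinearMap.range (T : H →ₗ[ℝ] EuclideanSpace ℝ (Fin N))) := by
    rw [← hrangeC]
    exact Submodule.finrank_mono hle
  have hker := ker_adjoint_eq T
  have hsum := (LinearMap.range (T : H →ₗ[ℝ] EuclideanSpace ℝ (Fin N))).finrank_add_finrank_orthogonal
  rw [finrank_euclideanSpace_fin] at hsum
  rw [hker]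
  omega
end

section
/- (Theorem 1, unique stationary point) Let ĉ = S∘h : A → ℝ^K be Fréchet differentiable on A ⊆ ℝ^K, satisfying the lower bound ‖ĉ(θ₁)−ĉ(θ₂)‖ ≥ α‖θ₁−θ₂‖ with α > 0 for all θ₁,θ₂ ∈ A. Define ε(θ) = (1/2)‖ĉ(θ) − ĉ(θ₀)‖². Then ∇ε(θ₁) = 0 for θ₁ ∈ A implies θ₁ = θ₀. -/
open scoped RealInnerProductSpace
open Filter Asymptotics

/-- If `c` expands distances by factor `α` near a point and has derivative `D` there,
then `D` is injective. -/
lemma aux_inj {K : ℕ} {A : Set (EuclideanSpace ℝ (Fin K))} (hA : IsOpen A)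
    {c : EuclideanSpace ℝ (Fin K) → EuclideanSpace ℝ (Fin K)}
    {D : EuclideanSpace ℝ (Fin K) →L[ℝ] EuclideanSpace ℝ (Fin K)}
    {θ : EuclideanSpace ℝ (Fin K)} (hθ : θ ∈ A)
    (hd : HasFDerivAt c D θ) {α : ℝ} (hα : 0 < α)
    (hlow : ∀ θ₁ ∈ A, ∀ θ₂ ∈ A, α * ‖θ₁ - θ₂‖ ≤ ‖c θ₁ - c θ₂‖)
    (v : EuclideanSpace ℝ (Fin K)) (hDv : D v = 0) : v = 0 := by
  by_contra hv
  have hvpos : 0 < ‖v‖ := norm_pos_iff.mpr hv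
  set δ : ℝ := α * ‖v‖ / 2 with hδ
  have hδpos : 0 < δ := by positivity
  -- the line t ↦ θ + t • v has derivative v at 0
  have hline : HasDerivAt (fun t : ℝ => θ + t • v) v 0 := by
    simpa using ((hasDerivAt_id (0 : ℝ)).smul_const v).const_add θ
  have hg : HasDerivAt (fun t : ℝ => c (θ + t • v)) 0 0 := by
    have hd' : HasFDerivAt c D ((fun t : ℝ => θ + t • v) 0) := by simpa using hd
    have := hd'.comp_hasDerivAt (0 : ℝ) hline
    rw [hDv] at this
    exact this
  have hlo : (fun t : ℝ => c (θ + t • v) - c θ) =o[nhds 0] fun t : ℝ => t := by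
    have := hasDerivAt_iff_isLittleO.mp hg
    simpa using this
  have h1 : ∀ᶠ t : ℝ in nhds 0, ‖c (θ + t • v) - c θ‖ ≤ δ * ‖t‖ :=
    hlo.def hδpos
  have h2 : ∀ᶠ t : ℝ in nhds 0, θ + t • v ∈ A := by
    have hcont : Filter.Tendsto (fun t : ℝ => θ + t • v) (nhds 0) (nhds θ) := by
      simpa using hline.continuousAt.tendsto
    exact hcont.eventually (hA.mem_nhds hθ)
  have h3 : ∀ᶠ t : ℝ in nhdsWithin 0 (Set.Ioi 0),
      ‖c (θ + t • v) - c θ‖ ≤ δ * ‖t‖ ∧ θ + t • v ∈ A ∧ t ∈ Set.Ioi (0:ℝ) :=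
    (((h1.and h2).filter_mono nhdsWithin_le_nhds).and eventually_mem_nhdsWithin).mono
      (fun t ⟨⟨a, b⟩, c⟩ => ⟨a, b, c⟩)
  obtain ⟨t, hub, hmem, ht⟩ := h3.exists
  have ht0 : 0 < t := ht
  have hge : α * ‖t • v‖ ≤ ‖c (θ + t • v) - c θ‖ := by
    have := hlow (θ + t • v) hmem θ hθ
    simpa using this
  have : α * (t * ‖v‖) ≤ δ * t := by
    rw [norm_smul, Real.norm_eq_abs, abs_of_pos ht0] at hge
    calc α * (t * ‖v‖) = α * (|t| * ‖v‖) := by rw [abs_of_pos ht0]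
      _ ≤ ‖c (θ + t • v) - c θ‖ := by
          simpa [abs_of_pos ht0] using hge
      _ ≤ δ * ‖t‖ := hub
      _ = δ * t := by rw [Real.norm_eq_abs, abs_of_pos ht0]
  have hαv : α * ‖v‖ ≤ δ := by
    have h' : (α * ‖v‖) * t ≤ δ * t := by nlinarith
    exact le_of_mul_le_mul_right h' ht0
  rw [hδ] at hαv
  nlinarith [mul_pos hα hvpos]

/-- Theorem 1: the LS objective has a unique stationary point. -/
theorem stmt_7 {K : ℕ}
    (A : Set (EuclideanSpace ℝ (Fin K))) (hA : IsOpen A)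
    (c : EuclideanSpace ℝ (Fin K) → EuclideanSpace ℝ (Fin K))
    (Dc : EuclideanSpace ℝ (Fin K) → (EuclideanSpace ℝ (Fin K) →L[ℝ] EuclideanSpace ℝ (Fin K)))
    (hderiv : ∀ θ ∈ A, HasFDerivAt c (Dc θ) θ)
    (α : ℝ) (hα : 0 < α)
    (hlow : ∀ θ₁ ∈ A, ∀ θ₂ ∈ A, α * ‖θ₁ - θ₂‖ ≤ ‖c θ₁ - c θ₂‖)
    (θ₀ : EuclideanSpace ℝ (Fin K)) (hθ₀ : θ₀ ∈ A)
    (ε : EuclideanSpace ℝ (Fin K) → ℝ)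
    (hε : ∀ θ, ε θ = (1 / 2) * ‖c θ - c θ₀‖ ^ 2)
    (θ₁ : EuclideanSpace ℝ (Fin K)) (hθ₁ : θ₁ ∈ A)
    (hstat : gradient ε θ₁ = 0) :
    θ₁ = θ₀ := by
  set u : EuclideanSpace ℝ (Fin K) := c θ₁ - c θ₀ with hu
  set D := Dc θ₁ with hD
  -- derivative of f = c · - c θ₀
  have hf : HasFDerivAt (fun θ => c θ - c θ₀) D θ₁ := (hderiv θ₁ hθ₁).sub_const _
  have h2 : HasFDerivAt (fun θ => ⟪c θ - c θ₀, c θ - c θ₀⟫)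
      ((fderivInnerCLM ℝ (c θ₁ - c θ₀, c θ₁ - c θ₀)).comp (D.prod D)) θ₁ :=
    hf.inner ℝ hf
  have h3 : HasFDerivAt ε
      ((1/2 : ℝ) • ((fderivInnerCLM ℝ (c θ₁ - c θ₀, c θ₁ - c θ₀)).comp (D.prod D))) θ₁ := by
    have hε' : ε = fun θ => (1/2 : ℝ) * ⟪c θ - c θ₀, c θ - c θ₀⟫ := by
      funext θ; rw [hε θ, real_inner_self_eq_norm_sq]
    rw [hε']
    exact h2.const_mul (1/2 : ℝ)
  -- identify the gradient
  have hkey : HasGradientAt ε (D.adjoint u) θ₁ := by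
    rw [hasGradientAt_iff_hasFDerivAt]
    refine h3.congr_fderiv ?_; symm
    ext v
    simp only [InnerProductSpace.toDual_apply_apply, ContinuousLinearMap.smul_apply,
      ContinuousLinearMap.comp_apply, ContinuousLinearMap.prod_apply, fderivInnerCLM_apply,
      ContinuousLinearMap.adjoint_inner_left]
    rw [real_inner_comm (D v) (c θ₁ - c θ₀), smul_eq_mul]
    ring
  have hgrad : D.adjoint u = 0 := by
    rw [← hkey.gradient]; exact hstat
  -- D is injective, hence surjective, hence its adjoint is injective
  have hinj : Function.Injective D := by
    intro a b hab
    have : a - b = 0 := aux_inj hA hθ₁ (hderiv θ₁ hθ₁) hα hlow (a - b) (by rw [map_sub, hab, sub_self])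
    exact sub_eq_zero.mp this
  have hsurj : Function.Surjective D :=
    LinearMap.injective_iff_surjective.mp hinj
  have hu0 : u = 0 := by
    obtain ⟨w, hw⟩ := hsurj u
    have h := ContinuousLinearMap.adjoint_inner_left D w u
    rw [hgrad, inner_zero_left] at h
    rw [hw] at h
    exact inner_self_eq_zero.mp h.symm
  have hle := hlow θ₁ hθ₁ θ₀ hθ₀
  rw [← hu, hu0, norm_zero] at hle
  have hn : ‖θ₁ - θ₀‖ = 0 := by nlinarith [norm_nonneg (θ₁ - θ₀)]
  have := norm_eq_zero.mp hn
  exact sub_eq_zero.mp this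
end

section
/- (CPM reparametrization) Let g : ℝ → ℝ be integrable with support in [0, LT], and for a sequence (a_m) define ã_m = Σ_{n ≤ m} a_n and g̃(t) = 2πh∫_{−∞}^t (g(τ) − g(τ−T)) dτ. Then for every t, 2πh ∫_{−∞}^t Σ_m a_m g(τ − mT) dτ = Σ_m ã_m g̃(t − mT) (for finitely supported sequences (a_m)), and g̃ is supported in [0, (L+1)T]. -/
open MeasureTheory

private lemma tele_nat (G : ℤ → ℝ) (M : ℤ) (k : ℕ) :
    ∑ m ∈ Finset.Icc M (M - 1 + (k : ℤ)), (G m - G (m + 1)) =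
      G M - G (M - 1 + (k : ℤ) + 1) := by
  induction k with
  | zero => rw [Finset.Icc_eq_empty (by omega)]; simp
  | succ k ih =>
      have hins : Finset.Icc M (M - 1 + ((k + 1 : ℕ) : ℤ)) =
          insert (M - 1 + (k : ℤ) + 1) (Finset.Icc M (M - 1 + (k : ℤ))) := by
        ext x; simp only [Finset.mem_Icc, Finset.mem_insert]; push_cast; omega
      have hnm : M - 1 + (k : ℤ) + 1 ∉ Finset.Icc M (M - 1 + (k : ℤ)) := by
        simp only [Finset.mem_Icc]; omega
      rw [hins, Finset.sum_insert hnm, ih]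
      have : M - 1 + ((k + 1 : ℕ) : ℤ) + 1 = M - 1 + (k : ℤ) + 1 + 1 := by push_cast; ring
      rw [this]; ring

private lemma tele_aux (G : ℤ → ℝ) (M N : ℤ) (hMN : M - 1 ≤ N) :
    ∑ m ∈ Finset.Icc M N, (G m - G (m + 1)) = G M - G (N + 1) := by
  obtain ⟨k, rfl⟩ : ∃ k : ℕ, N = M - 1 + (k : ℤ) := ⟨(N - (M - 1)).toNat, by omega⟩
  exact tele_nat G M k

/-- CPM reparametrization: the integrated modulation can be rewritten as a
shift-invariant expansion with the cumulative symbols `ã_m = Σ_{n ≤ m} a_n` and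
the pulse `g̃(t) = 2πh ∫_{−∞}^t (g(τ) − g(τ−T)) dτ`, which is supported in
`[0, (L+1)T]`. -/
theorem stmt_18 (T : ℝ) (hT : 0 < T) (L : ℕ) (hL : 0 < L) (h : ℝ)
    (g : ℝ → ℝ) (hg : Integrable g (volume : Measure ℝ))
    (hsupp : Function.support g ⊆ Set.Icc 0 ((L : ℝ) * T))
    (hint : ∫ τ, g τ = 1 / 2)
    (a : ℤ →₀ ℝ)
    (atilde : ℤ → ℝ)
    (hatilde : ∀ m : ℤ, atilde m = ∑ n ∈ a.support.filter (· ≤ m), a n)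
    (gtilde : ℝ → ℝ)
    (hgtilde : ∀ t : ℝ, gtilde t = 2 * Real.pi * h * ∫ τ in Set.Iic t, (g τ - g (τ - T))) :
    (∀ t : ℝ,
      2 * Real.pi * h * (∫ τ in Set.Iic t, ∑ m ∈ a.support, a m * g (τ - (m : ℝ) * T)) =
        ∑' m : ℤ, atilde m * gtilde (t - (m : ℝ) * T)) ∧
    Function.support gtilde ⊆ Set.Icc 0 (((L : ℝ) + 1) * T) := by
  set C : ℝ := 2 * Real.pi * h with hC
  set F : ℝ → ℝ := fun s => ∫ τ in Set.Iic s, g τ with hF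
  -- shift lemma
  have hshift : ∀ c s : ℝ, (∫ τ in Set.Iic s, g (τ - c)) = F (s - c) := by
    intro c s
    have h1 : (∫ τ in Set.Iic s, g (τ - c)) =
        ∫ τ, (Set.Iic s).indicator (fun τ => g (τ - c)) τ := by
      rw [integral_indicator measurableSet_Iic]
    have h2 : F (s - c) = ∫ τ, (Set.Iic (s - c)).indicator g τ := by
      rw [integral_indicator measurableSet_Iic]
    have h3 : (fun τ => (Set.Iic s).indicator (fun τ => g (τ - c)) τ) =
        fun τ => (Set.Iic (s - c)).indicator g (τ - c) := by
      funext τ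
      by_cases hτ : τ ≤ s
      · rw [Set.indicator_of_mem (Set.mem_Iic.2 hτ),
          Set.indicator_of_mem (Set.mem_Iic.2 (by linarith))]
      · rw [Set.indicator_of_notMem (by simpa using hτ),
          Set.indicator_of_notMem (by simp; linarith [not_le.1 hτ])]
    rw [h1, h2, h3, integral_sub_right_eq_self ((Set.Iic (s - c)).indicator g) c]
  -- F vanishes on nonpositive reals
  have hF0 : ∀ s : ℝ, s ≤ 0 → F s = 0 := by
    intro s hs
    have : F s = ∫ τ in Set.Iio s, g τ := by
      exact (setIntegral_congr_set Iio_ae_eq_Iic).symm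
    rw [this]
    refine setIntegral_eq_zero_of_forall_eq_zero fun x hx => ?_
    by_contra hne
    linarith [(hsupp hne).1, Set.mem_Iio.1 hx]
  -- F equals 1/2 past L*T
  have hFhalf : ∀ s : ℝ, (L : ℝ) * T ≤ s → F s = 1 / 2 := by
    intro s hs
    have : F s = ∫ τ, g τ := by
      refine setIntegral_eq_integral_of_forall_compl_eq_zero fun x hx => ?_
      by_contra hne
      have hmem := hsupp hne
      simp [Set.mem_Iic] at hx
      exact absurd hmem.2 (by linarith)
    rw [this, hint]
  -- gtilde in terms of F
  have hgt : ∀ s : ℝ, gtilde s = C * (F s - F (s - T)) := by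
    intro s
    rw [hgtilde s]
    congr 1
    rw [integral_sub hg.integrableOn ((hg.comp_sub_right T).integrableOn), hshift T s]
  have hgz_left : ∀ s : ℝ, s ≤ 0 → gtilde s = 0 := by
    intro s hs
    rw [hgt s, hF0 s hs, hF0 (s - T) (by linarith), sub_zero, mul_zero]
  have hgz_right : ∀ s : ℝ, ((L : ℝ) + 1) * T ≤ s → gtilde s = 0 := by
    intro s hs
    have hLs : (L : ℝ) * T ≤ s := by nlinarith
    have hLsT : (L : ℝ) * T ≤ s - T := by nlinarith
    rw [hgt s, hFhalf s hLs, hFhalf _ hLsT, sub_self, mul_zero]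
  constructor
  · intro t
    set Φ : ℤ → ℝ := fun m => C * F (t - (m : ℝ) * T) with hΦ
    have hgtm : ∀ m : ℤ, gtilde (t - (m : ℝ) * T) = Φ m - Φ (m + 1) := by
      intro m
      rw [hgt]
      have harg : t - (m : ℝ) * T - T = t - ((m : ℤ) + 1 : ℤ) * T := by push_cast; ring
      rw [harg, hΦ]
      push_cast
      ring
    -- step relation for atilde
    have hstep : ∀ m : ℤ, atilde m = atilde (m - 1) + a m := by
      intro m
      rw [hatilde, hatilde]
      by_cases hm : m ∈ a.support
      · have hfe : a.support.filter (· ≤ m) = insert m (a.support.filter (· ≤ m - 1)) := by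
          ext n
          simp only [Finset.mem_filter, Finset.mem_insert]
          constructor
          · rintro ⟨hn, hnm⟩
            rcases eq_or_lt_of_le hnm with he | hlt
            · exact Or.inl he
            · exact Or.inr ⟨hn, by omega⟩
          · rintro (rfl | ⟨hn, hnm⟩)
            · exact ⟨hm, le_refl _⟩
            · exact ⟨hn, by omega⟩
        rw [hfe, Finset.sum_insert (by simp)]
        ring
      · have hfe : a.support.filter (· ≤ m) = a.support.filter (· ≤ m - 1) := by
          ext n
          simp only [Finset.mem_filter]
          constructor
          · rintro ⟨hn, hnm⟩
            refine ⟨hn, ?_⟩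
            rcases eq_or_lt_of_le hnm with rfl | hlt
            · exact absurd hn hm
            · omega
          · rintro ⟨hn, hnm⟩; exact ⟨hn, by omega⟩
        rw [hfe, Finsupp.notMem_support_iff.1 hm, add_zero]
    -- bounds
    set K : ℕ := a.support.sup Int.natAbs with hK
    set M : ℤ := min (-(K : ℤ)) ⌊(t - ((L : ℝ) + 1) * T) / T⌋ with hM
    set N : ℤ := max (K : ℤ) ⌈t / T⌉ with hN
    have hsuppMN : ∀ n ∈ a.support, M ≤ n ∧ n ≤ N := by
      intro n hn
      have h1 : n.natAbs ≤ K := Finset.le_sup hn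
      constructor
      · refine le_trans (min_le_left _ _) ?_
        omega
      · refine le_trans ?_ (le_max_left _ _)
        omega
    have hΦhi : ∀ m : ℤ, N < m → Φ m = 0 := by
      intro m hm
      have h1 : ⌈t / T⌉ < m := lt_of_le_of_lt (le_max_right _ _) hm
      have h2 : t / T ≤ (m : ℝ) := le_trans (Int.le_ceil _) (by exact_mod_cast h1.le)
      have h3 : t ≤ (m : ℝ) * T := (div_le_iff₀ hT).1 h2
      rw [hΦ]; simp only
      rw [hF0 _ (by linarith), mul_zero]
    have hgthi : ∀ m : ℤ, N < m → gtilde (t - (m : ℝ) * T) = 0 := by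
      intro m hm
      have h1 : ⌈t / T⌉ < m := lt_of_le_of_lt (le_max_right _ _) hm
      have h2 : t / T ≤ (m : ℝ) := le_trans (Int.le_ceil _) (by exact_mod_cast h1.le)
      have h3 : t ≤ (m : ℝ) * T := (div_le_iff₀ hT).1 h2
      exact hgz_left _ (by linarith)
    have hgtlo : ∀ m : ℤ, m < M → gtilde (t - (m : ℝ) * T) = 0 := by
      intro m hm
      have h1 : m ≤ ⌊(t - ((L : ℝ) + 1) * T) / T⌋ :=
        le_trans hm.le (min_le_right _ _)
      have h2 : (m : ℝ) ≤ (t - ((L : ℝ) + 1) * T) / T := Int.le_floor.1 h1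
      have h3 : (m : ℝ) * T ≤ t - ((L : ℝ) + 1) * T := by
        rw [← le_div_iff₀ hT]; exact h2
      exact hgz_right _ (by linarith)
    have hatlo : ∀ m : ℤ, m < M → atilde m = 0 := by
      intro m hm
      rw [hatilde]
      refine Finset.sum_eq_zero fun n hn => ?_
      exfalso
      simp only [Finset.mem_filter] at hn
      have := (hsuppMN n hn.1).1
      omega
    -- tsum reduces to a finite sum
    have hts : (∑' m : ℤ, atilde m * gtilde (t - (m : ℝ) * T)) =
        ∑ m ∈ Finset.Icc M N, atilde m * gtilde (t - (m : ℝ) * T) := by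
      refine tsum_eq_sum fun m hm => ?_
      rw [Finset.mem_Icc] at hm
      push_neg at hm
      rcases lt_or_ge m M with hlt | hge
      · rw [hgtlo m hlt, mul_zero]
      · rw [hgthi m (hm hge), mul_zero]
    rw [hts]
    -- LHS
    have hMN : M - 1 ≤ N := by
      have : M ≤ (0 : ℤ) := le_trans (min_le_left _ _) (by omega)
      have : (0 : ℤ) ≤ N := le_trans (by omega) (le_max_left (K : ℤ) _)
      omega
    have hLHS : C * (∫ τ in Set.Iic t, ∑ m ∈ a.support, a m * g (τ - (m : ℝ) * T)) =
        ∑ m ∈ a.support, a m * Φ m := by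
      rw [integral_finset_sum (μ := volume.restrict (Set.Iic t)) a.support
        (f := fun (m : ℤ) (τ : ℝ) => a m * g (τ - (m : ℝ) * T)) (fun m _ =>
        ((hg.comp_sub_right ((m : ℝ) * T)).integrableOn.const_mul (a m)))]
      rw [Finset.mul_sum]
      refine Finset.sum_congr rfl fun m _ => ?_
      rw [MeasureTheory.integral_const_mul, hshift ((m : ℝ) * T) t, hΦ]
      ring
    -- Abel summation / telescoping
    set G : ℤ → ℝ := fun m => atilde (m - 1) * Φ m with hG
    have hterm : ∀ m : ℤ, atilde m * gtilde (t - (m : ℝ) * T) =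
        a m * Φ m + (G m - G (m + 1)) := by
      intro m
      rw [hgtm m, hG]
      simp only [add_sub_cancel_right]
      rw [hstep m]
      ring
    have hsum1 : ∑ m ∈ a.support, a m * Φ m = ∑ m ∈ Finset.Icc M N, a m * Φ m :=
      Finset.sum_subset (fun n hn => Finset.mem_Icc.2 (hsuppMN n hn))
        (fun x _ hx => by rw [Finsupp.notMem_support_iff.1 hx, zero_mul])
    have hsum2 : ∑ m ∈ Finset.Icc M N, atilde m * gtilde (t - (m : ℝ) * T) =
        ∑ m ∈ Finset.Icc M N, (a m * Φ m + (G m - G (m + 1))) :=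
      Finset.sum_congr rfl fun m _ => hterm m
    have hGM : G M = 0 := by
      rw [hG]; simp only; rw [hatlo (M - 1) (by omega), zero_mul]
    have hGN : G (N + 1) = 0 := by
      rw [hG]; simp only; rw [hΦhi (N + 1) (by omega), mul_zero]
    rw [hLHS, hsum1, hsum2, Finset.sum_add_distrib, tele_aux G M N hMN, hGM, hGN]
    ring
  · intro s hs
    by_contra hns
    simp only [Set.mem_Icc, not_and_or, not_le] at hns
    rcases hns with hlt | hgt'
    · exact hs (hgz_left s hlt.le)
    · exact hs (hgz_right s hgt'.le)
end
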